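/- A ring R is 'strongly U√Δ' (every non-unit is a commuting product of a unit and an element of √Δ(R)) if and only if R is a local ring. -/

import Mathlib

/-- Δ(R) = {x : 1 - x*u is a unit for every unit u}. -/
def Delta (R : Type*) [Ring R] : Set R :=
  {x | ∀ u : R, IsUnit u → IsUnit (1 - x * u)}

/-- √Δ(R) = {x : x^n ∈ Δ(R) for some n ≥ 1}. -/
def sqrtDelta (R : Type*) [Ring R] : Set R :=
  {x | ∃ n : ℕ, 1 ≤ n ∧ x ^ n ∈ Delta R}

lemma one_sub_of_pow {R : Type*} [Ring R] {a : R} {n : ℕ}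
    (h : IsUnit (1 - a ^ n)) : IsUnit (1 - a) := by
  set s := ∑ i ∈ Finset.range n, a ^ i with hs
  have h1 : s * (1 - a) = 1 - a ^ n := by
    rw [hs, ← neg_sub a 1, mul_neg, geom_sum_mul, neg_sub]
  have h2 : (1 - a) * s = 1 - a ^ n := by
    rw [hs, ← neg_sub a 1, neg_mul, mul_geom_sum, neg_sub]
  obtain ⟨v, hv⟩ := h
  rw [isUnit_iff_exists]
  refine ⟨s * ↑v⁻¹, ?_, ?_⟩
  · rw [← mul_assoc, h2, ← hv, Units.mul_inv]
  · have hsv : s * (1 - a) = (v : R) := by rw [h1, hv]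
    have hcomm : (1 - a) * s = s * (1 - a) := by rw [h1, h2]
    have : s * ↑v⁻¹ * (1 - a) = ↑v⁻¹ * (s * (1 - a)) := by
      have hc2 : (1 - a) * (v : R) = (v : R) * (1 - a) := by
        rw [← hsv, ← mul_assoc, hcomm, mul_assoc]
      have hc3 : (↑v⁻¹ : R) * (1 - a) = (1 - a) * ↑v⁻¹ :=
        (Units.inv_mul_eq_iff_eq_mul v).2 (by rw [← mul_assoc, ← hc2, mul_assoc, Units.mul_inv, mul_one])
      rw [mul_assoc, hc3, ← mul_assoc, hsv, Units.mul_inv, Units.inv_mul]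
    rw [this, hsv, Units.inv_mul]

theorem stmt_18 {R : Type*} [Ring R] [Nontrivial R] :
    (∀ a : R, ¬ IsUnit a →
      ∃ u d : R, IsUnit u ∧ d ∈ sqrtDelta R ∧ a = u * d ∧ u * d = d * u) ↔
    IsLocalRing R := by
  constructor
  · intro H
    refine ⟨fun {a b} hab => ?_⟩
    have hb : b = 1 - a := by rw [← hab, add_sub_cancel_left]
    subst hb
    by_cases ha : IsUnit a
    · exact Or.inl ha
    · right
      obtain ⟨u, d, hu, ⟨n, hn, hd⟩, had, hcomm⟩ := H a ha
      have hcomm' : Commute u d := hcomm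
      have hpow : a ^ n = d ^ n * u ^ n := by
        rw [had, hcomm, (hcomm'.symm).mul_pow]
      have : IsUnit (1 - a ^ n) := by
        rw [hpow]; exact hd (u ^ n) (hu.pow n)
      exact one_sub_of_pow this
  · intro hl a ha
    haveI : IsLocalRing R := hl
    refine ⟨1, a, isUnit_one, ⟨1, le_refl 1, ?_⟩, by rw [one_mul], by rw [one_mul, mul_one]⟩
    intro u hu
    rw [pow_one]
    have hau : ¬ IsUnit (a * u) := fun h => ha (by
      have := h.mul hu.unit⁻¹.isUnit
      rwa [mul_assoc, IsUnit.mul_val_inv, mul_one] at this)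
    rcases IsLocalRing.isUnit_or_isUnit_of_add_one
      (add_sub_cancel (a * u) 1) with h | h
    · exact absurd h hau
    · exact h
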